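/- For any positive integer r, natural number m, and an indeterminate (or element of a commutative ring) q, the sum over all r-tuples (m_1, ..., m_r) of natural numbers with m_1 + ... + m_r = m of q^{\sum_{j=1}^r (r-j) m_j} equals the Gaussian binomial coefficient \binom{m+r-1}{m}_q. -/

import Mathlib

/-- The Gaussian (q-)binomial coefficient `\binom{n}{k}_q`, defined via the
q-Pascal recurrence `\binom{n+1}{k+1}_q = \binom{n}{k}_q + q^{k+1} \binom{n}{k+1}_q`. -/
def gbinom {R : Type*} [CommRing R] (q : R) : ℕ → ℕ → R
  | 0, 0 => 1
  | 0, _ + 1 => 0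
  | _ + 1, 0 => 1
  | n + 1, k + 1 => gbinom q n k + q ^ (k + 1) * gbinom q n (k + 1)

lemma gbinom_succ_succ {R : Type*} [CommRing R] (q : R) (n k : ℕ) :
    gbinom q (n + 1) (k + 1) = gbinom q n k + q ^ (k + 1) * gbinom q n (k + 1) := rfl

lemma gbinom_zero_right {R : Type*} [CommRing R] (q : R) (n : ℕ) : gbinom q n 0 = 1 := by
  cases n <;> rfl

lemma gbinom_eq_zero {R : Type*} [CommRing R] (q : R) :
    ∀ n k : ℕ, n < k → gbinom q n k = 0 := by
  intro n
  induction n with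
  | zero =>
    intro k hk
    obtain ⟨k, rfl⟩ := Nat.exists_eq_add_of_lt hk
    simp [gbinom]
  | succ n ih =>
    intro k hk
    obtain ⟨k, rfl⟩ := Nat.exists_eq_succ_of_ne_zero (by omega : k ≠ 0)
    rw [Nat.succ_eq_add_one, gbinom_succ_succ, ih k (by omega), ih (k + 1) (by omega)]
    ring

lemma gbinom_diag {R : Type*} [CommRing R] (q : R) (n : ℕ) : gbinom q n n = 1 := by
  induction n with
  | zero => rfl
  | succ n ih =>
    rw [gbinom_succ_succ, ih, gbinom_eq_zero q n (n + 1) (by omega)]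
    ring

/-- The dual q-Pascal identity. -/
lemma gbinom_dual {R : Type*} [CommRing R] (q : R) :
    ∀ n k : ℕ, k ≤ n →
      gbinom q (n + 1) (k + 1) = gbinom q n (k + 1) + q ^ (n - k) * gbinom q n k := by
  intro n
  induction n with
  | zero =>
    intro k hk
    interval_cases k
    norm_num [show gbinom q 1 1 = gbinom q 0 0 + q ^ 1 * gbinom q 0 1 from rfl,
      show gbinom q 0 0 = (1 : R) from rfl, show gbinom q 0 1 = (0 : R) from rfl]
  | succ n ih =>
    intro k hk
    match k with
    | 0 =>
      have d0 := gbinom_succ_succ q (n + 1) 0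
      have e := ih 0 (Nat.zero_le n)
      have d := gbinom_succ_succ q n 0
      rw [gbinom_zero_right q (n + 1)] at d0 ⊢
      rw [gbinom_zero_right q n] at e d
      simp only [Nat.sub_zero] at e ⊢
      have hq : q ^ (0 + 1) * q ^ n = q ^ (n + 1) := by
        rw [← pow_add]; congr 1; omega
      linear_combination d0 + q ^ (0 + 1) * e - d + hq
    | k + 1 =>
      rcases Nat.lt_or_ge k n with hkn | hkn
      · have d0 := gbinom_succ_succ q (n + 1) (k + 1)
        have e1 := ih k (by omega)
        have e2 := ih (k + 1) (by omega)
        have d1 := gbinom_succ_succ q n (k + 1)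
        have d2 := gbinom_succ_succ q n k
        have hq : q ^ (k + 1 + 1) * q ^ (n - (k + 1)) = q ^ (n + 1 - (k + 1)) * q ^ (k + 1) := by
          rw [← pow_add, ← pow_add]; congr 1; omega
        have hnk : n + 1 - (k + 1) = n - k := by omega
        rw [hnk] at hq
        rw [hnk]
        linear_combination d0 + e1 + q ^ (k + 1 + 1) * e2 - d1 - q ^ (n - k) * d2 +
          gbinom q n (k + 1) * hq
      · have hk' : k = n := by omega
        rw [hk', gbinom_succ_succ, gbinom_diag,
          gbinom_eq_zero q (n + 1) (n + 1 + 1) (by omega)]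
        simp

lemma key_sum {R : Type*} [CommRing R] (q : R) (r : ℕ) :
    ∀ m : ℕ, ∑ p ∈ Finset.HasAntidiagonal.antidiagonal m,
        q ^ (r * p.1) * gbinom q (p.2 + r - 1) p.2 = gbinom q (m + r) m := by
  intro m
  induction m with
  | zero =>
    simp [gbinom_zero_right]
  | succ m ih =>
    rw [Finset.Nat.sum_antidiagonal_succ
      (f := fun p => q ^ (r * p.1) * gbinom q (p.2 + r - 1) p.2)]
    have step : ∀ p ∈ Finset.HasAntidiagonal.antidiagonal m,
        q ^ (r * (p.1 + 1)) * gbinom q (p.2 + r - 1) p.2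
        = q ^ r * (q ^ (r * p.1) * gbinom q (p.2 + r - 1) p.2) := by
      intro p _
      rw [show r * (p.1 + 1) = r + r * p.1 by ring, pow_add]
      ring
    rw [Finset.sum_congr rfl step, ← Finset.mul_sum, ih]
    have goal_eq : gbinom q (m + 1 + r) (m + 1) =
        gbinom q (m + r) (m + 1) + q ^ r * gbinom q (m + r) m := by
      have := gbinom_dual q (m + r) m (by omega)
      rw [show m + 1 + r = m + r + 1 by omega, this, show m + r - m = r by omega]
    rw [goal_eq]
    have h1 : m + 1 + r - 1 = m + r := by omega
    rw [h1, mul_zero, pow_zero, one_mul]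

lemma sum_antidiagonalTuple_succ {M : Type*} [AddCommMonoid M] (r m : ℕ)
    (f : (Fin (r + 1) → ℕ) → M) :
    ∑ t ∈ Finset.Nat.antidiagonalTuple (r + 1) m, f t
      = ∑ p ∈ Finset.HasAntidiagonal.antidiagonal m, ∑ t ∈ Finset.Nat.antidiagonalTuple r p.2,
          f (Fin.cons p.1 t) := by
  rw [Finset.sum_sigma']
  refine Finset.sum_nbij' (fun t => ⟨(t 0, ∑ i, Fin.tail t i), Fin.tail t⟩)
    (fun x => Fin.cons x.1.1 x.2) ?_ ?_ ?_ ?_ ?_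
  · intro t ht
    simp only [Finset.Nat.mem_antidiagonalTuple, Fin.sum_univ_succ] at ht
    simp only [Finset.mem_sigma, Finset.HasAntidiagonal.mem_antidiagonal,
      Finset.Nat.mem_antidiagonalTuple]
    exact ⟨ht, trivial⟩
  · rintro ⟨⟨a, b⟩, t⟩ hx
    simp only [Finset.mem_sigma, Finset.HasAntidiagonal.mem_antidiagonal,
      Finset.Nat.mem_antidiagonalTuple] at hx ⊢
    rw [Fin.sum_cons, hx.2, hx.1]
  · intro t ht
    exact Fin.cons_self_tail t
  · rintro ⟨⟨a, b⟩, t⟩ hx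
    simp only [Finset.mem_sigma, Finset.HasAntidiagonal.mem_antidiagonal,
      Finset.Nat.mem_antidiagonalTuple] at hx
    simp only [Fin.cons_zero, Fin.tail_cons]
    rw [hx.2]
  · intro t ht
    rw [Fin.cons_self_tail t]

theorem sum_tuples_eq_gbinom {R : Type*} [CommRing R] (q : R) (r : ℕ) (hr : 0 < r) (m : ℕ) :
    ∑ t ∈ Finset.Nat.antidiagonalTuple r m,
        q ^ (∑ j : Fin r, (r - 1 - (j : ℕ)) * t j) =
      gbinom q (m + r - 1) m := by
  clear hr
  induction r generalizing m with
  | zero =>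
    cases m with
    | zero => simp [Finset.Nat.antidiagonalTuple_zero_zero, gbinom]
    | succ m =>
      rw [Finset.Nat.antidiagonalTuple_zero_succ, Finset.sum_empty,
        gbinom_eq_zero q (m + 1 + 0 - 1) (m + 1) (by omega)]
  | succ r ih =>
    rw [sum_antidiagonalTuple_succ]
    have step : ∀ p ∈ Finset.HasAntidiagonal.antidiagonal m,
        (∑ t ∈ Finset.Nat.antidiagonalTuple r p.2,
          q ^ (∑ j : Fin (r + 1), (r + 1 - 1 - (j : ℕ)) * (Fin.cons p.1 t : Fin (r+1) → ℕ) j))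
        = q ^ (r * p.1) * gbinom q (p.2 + r - 1) p.2 := by
      intro p _
      rw [← ih p.2, Finset.mul_sum]
      refine Finset.sum_congr rfl fun t _ => ?_
      rw [← pow_add]
      congr 1
      rw [Fin.sum_univ_succ]
      simp only [Fin.cons_zero, Fin.cons_succ, Fin.val_zero, Fin.val_succ,
        Nat.add_sub_cancel, Nat.sub_zero]
      congr 1
      refine Finset.sum_congr rfl fun j _ => ?_
      congr 1
      omega
    rw [Finset.sum_congr rfl step, key_sum q r m, show m + (r + 1) - 1 = m + r by omega]
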